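/- Define P: W → W on monomials m = n·x_3^i x_5^j x_9^k (n a monomial in x_2,x_8,x_{12}) by: P(m) = n·x_3^{i−2}x_5^{j+1}x_9^k if i ≥ 2; P(m) = n·x_3^i x_5^{j−2} x_9^{k+1} if i ≤ 1, j,k even, j ≠ 0; P(m) = n·x_3^i x_9^{k−2}(x_5x_{12} + x_8x_9 + x_3x_5x_9) if i ≤ 1, j = 0, k ≥ 2 even; P(m) = 0 otherwise. Then PD + DP = λ + id, where λ is the linear map fixing monomials of the form x_2^a x_8^b x_{12}^c and x_2^a x_8^b x_{12}^c x_3 and killing all other monomials. Consequently λ is chain homotopic to the identity on (W, D). -/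

import Mathlib

open MvPolynomial

-- Variables: X 0 = x_2, X 1 = x_3, X 2 = x_5, X 3 = x_8, X 4 = x_9, X 5 = x_12.

noncomputable def Jid : Ideal (MvPolynomial (Fin 6) (ZMod 2)) :=
  Ideal.span {X 0 * X 1, X 0 * X 2, X 0 * X 4,
    X 4 ^ 2 + X 1 ^ 2 * X 5 + X 2 ^ 2 * X 3 + X 1 ^ 3 * X 4 + X 1 * X 2 ^ 3}

noncomputable def Dder :
    Derivation (ZMod 2) (MvPolynomial (Fin 6) (ZMod 2)) (MvPolynomial (Fin 6) (ZMod 2)) :=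
  mkDerivation (ZMod 2) ![0, 0, X 1 ^ 2, 0, X 2 ^ 2, 0]

/-- The value of the chain homotopy P on the monomial with exponent vector m. -/
noncomputable def Pmono (m : Fin 6 →₀ ℕ) : MvPolynomial (Fin 6) (ZMod 2) :=
  let i := m 1
  let j := m 2
  let k := m 4
  let base : MvPolynomial (Fin 6) (ZMod 2) := X 0 ^ m 0 * X 3 ^ m 3 * X 5 ^ m 5
  if 2 ≤ i then base * X 1 ^ (i - 2) * X 2 ^ (j + 1) * X 4 ^ k
  else if j % 2 = 0 ∧ k % 2 = 0 ∧ j ≠ 0 then base * X 1 ^ i * X 2 ^ (j - 2) * X 4 ^ (k + 1)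
  else if j = 0 ∧ 2 ≤ k ∧ k % 2 = 0 then
    base * X 1 ^ i * X 4 ^ (k - 2) * (X 2 * X 5 + X 3 * X 4 + X 1 * X 2 * X 4)
  else 0

/-- The chain homotopy P, extended linearly over the monomial basis. -/
noncomputable def Pmap (f : MvPolynomial (Fin 6) (ZMod 2)) : MvPolynomial (Fin 6) (ZMod 2) :=
  ∑ m ∈ f.support, f.coeff m • Pmono m

/-- The projection λ, fixing the monomials x_2^a x_8^b x_12^c and x_2^a x_8^b x_12^c x_3
and killing all other monomials. -/
noncomputable def lamMap (f : MvPolynomial (Fin 6) (ZMod 2)) : MvPolynomial (Fin 6) (ZMod 2) :=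
  ∑ m ∈ f.support, f.coeff m •
    (if m 1 ≤ 1 ∧ m 2 = 0 ∧ m 4 = 0 then (monomial m 1 : MvPolynomial (Fin 6) (ZMod 2)) else 0)

lemma Pmap_eq_sum (f : MvPolynomial (Fin 6) (ZMod 2)) :
    Pmap f = (AddMonoidAlgebra.coeff f).sum fun m c => c • Pmono m := rfl

lemma Pmap_add (f g : MvPolynomial (Fin 6) (ZMod 2)) : Pmap (f + g) = Pmap f + Pmap g := by
  rw [Pmap_eq_sum, Pmap_eq_sum, Pmap_eq_sum, AddMonoidAlgebra.coeff_add]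
  exact Finsupp.sum_add_index' (fun _ => zero_smul _ _) (fun _ b c => add_smul b c _)

lemma lamMap_eq_sum (f : MvPolynomial (Fin 6) (ZMod 2)) :
    lamMap f = (AddMonoidAlgebra.coeff f).sum fun m c => c •
      (if m 1 ≤ 1 ∧ m 2 = 0 ∧ m 4 = 0 then (monomial m 1 : MvPolynomial (Fin 6) (ZMod 2)) else 0) :=
  rfl

lemma lamMap_add (f g : MvPolynomial (Fin 6) (ZMod 2)) :
    lamMap (f + g) = lamMap f + lamMap g := by
  rw [lamMap_eq_sum, lamMap_eq_sum, lamMap_eq_sum, AddMonoidAlgebra.coeff_add]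
  exact Finsupp.sum_add_index' (fun _ => zero_smul _ _) (fun _ b c => add_smul b c _)

lemma Pmap_monomial (u : Fin 6 →₀ ℕ) (c : ZMod 2) : Pmap (monomial u c) = c • Pmono u := by
  by_cases hc : c = 0 <;> simp [Pmap, support_monomial, hc, coeff_monomial]

lemma lamMap_monomial (u : Fin 6 →₀ ℕ) (c : ZMod 2) : lamMap (monomial u c) =
    c • (if u 1 ≤ 1 ∧ u 2 = 0 ∧ u 4 = 0
      then (monomial u 1 : MvPolynomial (Fin 6) (ZMod 2)) else 0) := by
  by_cases hc : c = 0 <;> simp [lamMap, support_monomial, hc, coeff_monomial]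

lemma Pmono_apply (u : Fin 6 →₀ ℕ) : Pmono u =
    (if 2 ≤ u 1 then X 0 ^ u 0 * X 3 ^ u 3 * X 5 ^ u 5 * X 1 ^ (u 1 - 2) * X 2 ^ (u 2 + 1) * X 4 ^ u 4
  else if u 2 % 2 = 0 ∧ u 4 % 2 = 0 ∧ u 2 ≠ 0 then
    X 0 ^ u 0 * X 3 ^ u 3 * X 5 ^ u 5 * X 1 ^ u 1 * X 2 ^ (u 2 - 2) * X 4 ^ (u 4 + 1)
  else if u 2 = 0 ∧ 2 ≤ u 4 ∧ u 4 % 2 = 0 then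
    X 0 ^ u 0 * X 3 ^ u 3 * X 5 ^ u 5 * X 1 ^ u 1 * X 4 ^ (u 4 - 2) *
      (X 2 * X 5 + X 3 * X 4 + X 1 * X 2 * X 4)
  else 0) := rfl

lemma vec5 : (![0, 0, X 1 ^ 2, 0, X 2 ^ 2, 0] : Fin 6 → MvPolynomial (Fin 6) (ZMod 2)) 5 = 0 := rfl

lemma mono_eq (m : Fin 6 →₀ ℕ) : (monomial m 1 : MvPolynomial (Fin 6) (ZMod 2)) =
    X 0 ^ m 0 * X 1 ^ m 1 * X 2 ^ m 2 * X 3 ^ m 3 * X 4 ^ m 4 * X 5 ^ m 5 := by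
  rw [monomial_eq, Finsupp.prod_fintype _ _ (fun i => pow_zero _), Fin.prod_univ_six]
  simp

lemma Dmono (m : Fin 6 →₀ ℕ) : Dder (monomial m 1) =
    monomial (m - Finsupp.single 2 1 + Finsupp.single 1 2) ((m 2 : ZMod 2)) +
    monomial (m - Finsupp.single 4 1 + Finsupp.single 2 2) ((m 4 : ZMod 2)) := by
  rw [Dder, mkDerivation_monomial, one_smul,
    Finsupp.sum_fintype _ _ (by intro i; simp), Fin.sum_univ_six]
  simp only [Matrix.cons_val_zero, Matrix.cons_val_one, Matrix.head_cons,
    Matrix.cons_val_two, Matrix.tail_cons, Matrix.cons_val_three, Matrix.cons_val_four,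
    Matrix.cons_val_fin_one, vec5, smul_zero, zero_add, add_zero]
  rw [smul_eq_mul, smul_eq_mul, X_pow_eq_monomial, X_pow_eq_monomial, monomial_mul,
    monomial_mul, mul_one, mul_one]

lemma Dder_prod6 (a b c p q r : ℕ) :
    Dder (X 0 ^ a * X 3 ^ b * X 5 ^ c * X 1 ^ p * X 2 ^ q * X 4 ^ r) =
      (q : ZMod 2) • (X 0 ^ a * X 3 ^ b * X 5 ^ c * X 1 ^ (p + 2) * X 2 ^ (q - 1) * X 4 ^ r)
    + (r : ZMod 2) • (X 0 ^ a * X 3 ^ b * X 5 ^ c * X 1 ^ p * X 2 ^ (q + 2) * X 4 ^ (r - 1)) := by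
  simp only [Derivation.leibniz, Derivation.leibniz_pow, Dder, mkDerivation_X,
    Matrix.cons_val_zero, Matrix.cons_val_one, Matrix.head_cons, Matrix.cons_val_two,
    Matrix.tail_cons, Matrix.cons_val_three, Matrix.cons_val_four, Matrix.cons_val_fin_one,
    vec5, mul_zero, smul_zero, zero_add, add_zero, smul_eq_mul]
  rw [Nat.cast_smul_eq_nsmul, Nat.cast_smul_eq_nsmul]
  simp only [nsmul_eq_mul, smul_eq_mul]
  ring

lemma rel_mem : (X 4 ^ 2 + X 1 ^ 2 * X 5 + X 2 ^ 2 * X 3 + X 1 ^ 3 * X 4 + X 1 * X 2 ^ 3 :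
    MvPolynomial (Fin 6) (ZMod 2)) ∈ Jid :=
  Ideal.subset_span (by simp)

set_option maxHeartbeats 2000000 in
lemma key (m : Fin 6 →₀ ℕ) :
    Pmap (Dder (monomial m 1)) + Dder (Pmap (monomial m 1)) -
      (lamMap (monomial m 1) + monomial m 1) ∈ Jid := by
  have c10 : ((m - Finsupp.single 2 1 + Finsupp.single 1 2 : Fin 6 →₀ ℕ)) 0 = m 0 := by
    simp [Finsupp.coe_add, Finsupp.coe_tsub, Finsupp.single_apply]
  have c11 : ((m - Finsupp.single 2 1 + Finsupp.single 1 2 : Fin 6 →₀ ℕ)) 1 = m 1 + 2 := by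
    simp [Finsupp.coe_add, Finsupp.coe_tsub, Finsupp.single_apply]
  have c12 : ((m - Finsupp.single 2 1 + Finsupp.single 1 2 : Fin 6 →₀ ℕ)) 2 = m 2 - 1 := by
    simp [Finsupp.coe_add, Finsupp.coe_tsub, Finsupp.single_apply]
  have c13 : ((m - Finsupp.single 2 1 + Finsupp.single 1 2 : Fin 6 →₀ ℕ)) 3 = m 3 := by
    simp [Finsupp.coe_add, Finsupp.coe_tsub, Finsupp.single_apply]
  have c14 : ((m - Finsupp.single 2 1 + Finsupp.single 1 2 : Fin 6 →₀ ℕ)) 4 = m 4 := by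
    simp [Finsupp.coe_add, Finsupp.coe_tsub, Finsupp.single_apply]
  have c15 : ((m - Finsupp.single 2 1 + Finsupp.single 1 2 : Fin 6 →₀ ℕ)) 5 = m 5 := by
    simp [Finsupp.coe_add, Finsupp.coe_tsub, Finsupp.single_apply]
  have c20 : ((m - Finsupp.single 4 1 + Finsupp.single 2 2 : Fin 6 →₀ ℕ)) 0 = m 0 := by
    simp [Finsupp.coe_add, Finsupp.coe_tsub, Finsupp.single_apply]
  have c21 : ((m - Finsupp.single 4 1 + Finsupp.single 2 2 : Fin 6 →₀ ℕ)) 1 = m 1 := by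
    simp [Finsupp.coe_add, Finsupp.coe_tsub, Finsupp.single_apply]
  have c22 : ((m - Finsupp.single 4 1 + Finsupp.single 2 2 : Fin 6 →₀ ℕ)) 2 = m 2 + 2 := by
    simp [Finsupp.coe_add, Finsupp.coe_tsub, Finsupp.single_apply]
  have c23 : ((m - Finsupp.single 4 1 + Finsupp.single 2 2 : Fin 6 →₀ ℕ)) 3 = m 3 := by
    simp [Finsupp.coe_add, Finsupp.coe_tsub, Finsupp.single_apply]
  have c24 : ((m - Finsupp.single 4 1 + Finsupp.single 2 2 : Fin 6 →₀ ℕ)) 4 = m 4 - 1 := by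
    simp [Finsupp.coe_add, Finsupp.coe_tsub, Finsupp.single_apply]
  have c25 : ((m - Finsupp.single 4 1 + Finsupp.single 2 2 : Fin 6 →₀ ℕ)) 5 = m 5 := by
    simp [Finsupp.coe_add, Finsupp.coe_tsub, Finsupp.single_apply]
  rw [Dmono, Pmap_add, Pmap_monomial, Pmap_monomial, Pmap_monomial, one_smul, lamMap_monomial,
    one_smul, mono_eq, Pmono_apply m, Pmono_apply (m - Finsupp.single 2 1 + Finsupp.single 1 2),
    Pmono_apply (m - Finsupp.single 4 1 + Finsupp.single 2 2)]
  simp only [c10, c11, c12, c13, c14, c15, c20, c21, c22, c23, c24, c25]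
  clear c10 c11 c12 c13 c14 c15 c20 c21 c22 c23 c24 c25
  generalize m 0 = a, m 1 = i, m 2 = j, m 3 = b, m 4 = k, m 5 = c
  rcases Nat.lt_or_ge i 2 with hi | hi
  · -- i ≤ 1
    rw [if_pos (show 2 ≤ i + 2 by omega), if_neg (show ¬ 2 ≤ i by omega),
      if_neg (show ¬ 2 ≤ i by omega)]
    rcases Nat.mod_two_eq_zero_or_one j with hj | hj
    · rcases Nat.eq_zero_or_pos j with rfl | hj0
      · -- j = 0
        rcases Nat.mod_two_eq_zero_or_one k with hk | hk
        · rcases Nat.eq_zero_or_pos k with rfl | hk0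
          · -- j = 0, k = 0
            rw [if_neg (show ¬ ((0:ℕ) % 2 = 0 ∧ (0:ℕ) % 2 = 0 ∧ (0:ℕ) ≠ 0) by omega),
              if_neg (show ¬ ((0:ℕ) = 0 ∧ 2 ≤ (0:ℕ) ∧ (0:ℕ) % 2 = 0) by omega),
              if_pos (show i ≤ 1 ∧ (0:ℕ) = 0 ∧ (0:ℕ) = 0 by omega), map_zero]
            push_cast
            simp only [zero_smul, zero_add, add_zero, smul_zero]
            convert Ideal.zero_mem Jid using 2
            ring_nf
            all_goals simp [CharTwo.two_eq_zero]
          · -- j = 0, k = 2s+2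
            obtain ⟨s, rfl⟩ : ∃ s, k = 2*s+2 := ⟨(k-2)/2, by omega⟩
            rw [if_neg (show ¬ ((0:ℕ) % 2 = 0 ∧ (2*s+2) % 2 = 0 ∧ (0:ℕ) ≠ 0) by omega),
              if_pos (show (0:ℕ) = 0 ∧ 2 ≤ 2*s+2 ∧ (2*s+2) % 2 = 0 by omega),
              if_neg (show ¬ (i ≤ 1 ∧ (0:ℕ) = 0 ∧ 2*s+2 = 0) by omega)]
            simp only [Nat.add_sub_cancel]
            rw [show (X 0 ^ a * X 3 ^ b * X 5 ^ c * X 1 ^ i * X 4 ^ (2*s) *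
                  (X 2 * X 5 + X 3 * X 4 + X 1 * X 2 * X 4) :
                    MvPolynomial (Fin 6) (ZMod 2))
                = X 0 ^ a * X 3 ^ b * X 5 ^ (c+1) * X 1 ^ i * X 2 ^ 1 * X 4 ^ (2*s)
                + X 0 ^ a * X 3 ^ (b+1) * X 5 ^ c * X 1 ^ i * X 2 ^ 0 * X 4 ^ (2*s+1)
                + X 0 ^ a * X 3 ^ b * X 5 ^ c * X 1 ^ (i+1) * X 2 ^ 1 * X 4 ^ (2*s+1) from by
                  ring,
              map_add, map_add, Dder_prod6, Dder_prod6, Dder_prod6]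
            push_cast
            simp only [show (2:ZMod 2) = 0 from rfl, zero_mul, zero_add, add_zero, zero_smul,
              one_smul, smul_zero, Nat.add_sub_cancel]
            convert Ideal.mul_mem_left Jid
              (X 0 ^ a * X 3 ^ b * X 5 ^ c * X 1 ^ i * X 4 ^ (2*s)) rel_mem using 1
            rw [← sub_eq_zero]
            ring_nf
            all_goals simp [CharTwo.two_eq_zero]
        · -- j = 0, k odd
          obtain ⟨s, rfl⟩ : ∃ s, k = 2*s+1 := ⟨k/2, by omega⟩
          rw [if_pos (show ((0:ℕ)+2) % 2 = 0 ∧ (2*s+1-1) % 2 = 0 ∧ (0:ℕ)+2 ≠ 0 by omega),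
            if_neg (show ¬ ((0:ℕ) % 2 = 0 ∧ (2*s+1) % 2 = 0 ∧ (0:ℕ) ≠ 0) by omega),
            if_neg (show ¬ ((0:ℕ) = 0 ∧ 2 ≤ 2*s+1 ∧ (2*s+1) % 2 = 0) by omega),
            if_neg (show ¬ (i ≤ 1 ∧ (0:ℕ) = 0 ∧ 2*s+1 = 0) by omega), map_zero]
          simp only [Nat.add_sub_cancel]
          push_cast
          simp only [show (2:ZMod 2) = 0 from rfl, zero_mul, zero_add, add_zero, zero_smul,
            one_smul, smul_zero]
          convert Ideal.zero_mem Jid using 2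
          ring_nf
          all_goals simp [CharTwo.two_eq_zero]
      · -- j even positive
        obtain ⟨t, rfl⟩ : ∃ t, j = 2*t+2 := ⟨(j-2)/2, by omega⟩
        rcases Nat.mod_two_eq_zero_or_one k with hk | hk
        · -- k even
          obtain ⟨s, rfl⟩ : ∃ s, k = 2*s := ⟨k/2, by omega⟩
          rw [if_pos (show (2*t+2) % 2 = 0 ∧ 2*s % 2 = 0 ∧ 2*t+2 ≠ 0 by omega),
            if_neg (show ¬ (i ≤ 1 ∧ 2*t+2 = 0 ∧ 2*s = 0) by omega)]
          simp only [Nat.add_sub_cancel]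
          rw [Dder_prod6]
          simp only [Nat.add_sub_cancel]
          push_cast
          simp only [show (2:ZMod 2) = 0 from rfl, zero_mul, zero_add, add_zero, zero_smul,
            one_smul, smul_zero]
          convert Ideal.zero_mem Jid using 2
          ring_nf
          all_goals simp [CharTwo.two_eq_zero]
        · -- k odd
          obtain ⟨s, rfl⟩ : ∃ s, k = 2*s+1 := ⟨k/2, by omega⟩
          rw [if_pos (show (2*t+2+2) % 2 = 0 ∧ (2*s+1-1) % 2 = 0 ∧ 2*t+2+2 ≠ 0 by omega),
            if_neg (show ¬ ((2*t+2) % 2 = 0 ∧ (2*s+1) % 2 = 0 ∧ 2*t+2 ≠ 0) by omega),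
            if_neg (show ¬ (2*t+2 = 0 ∧ 2 ≤ 2*s+1 ∧ (2*s+1) % 2 = 0) by omega),
            if_neg (show ¬ (i ≤ 1 ∧ 2*t+2 = 0 ∧ 2*s+1 = 0) by omega), map_zero]
          simp only [Nat.add_sub_cancel]
          push_cast
          simp only [show (2:ZMod 2) = 0 from rfl, zero_mul, zero_add, add_zero, zero_smul,
            one_smul, smul_zero]
          convert Ideal.zero_mem Jid using 2
          ring_nf
          all_goals simp [CharTwo.two_eq_zero]
    · -- j odd
      obtain ⟨t, rfl⟩ : ∃ t, j = 2*t+1 := ⟨j/2, by omega⟩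
      rw [if_neg (show ¬ ((2*t+1+2) % 2 = 0 ∧ (k-1) % 2 = 0 ∧ 2*t+1+2 ≠ 0) by omega),
        if_neg (show ¬ (2*t+1+2 = 0 ∧ 2 ≤ k-1 ∧ (k-1) % 2 = 0) by omega),
        if_neg (show ¬ ((2*t+1) % 2 = 0 ∧ k % 2 = 0 ∧ 2*t+1 ≠ 0) by omega),
        if_neg (show ¬ (2*t+1 = 0 ∧ 2 ≤ k ∧ k % 2 = 0) by omega),
        if_neg (show ¬ (i ≤ 1 ∧ 2*t+1 = 0 ∧ k = 0) by omega), map_zero]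
      simp only [Nat.add_sub_cancel]
      push_cast
      simp only [show (2:ZMod 2) = 0 from rfl, zero_mul, zero_add, add_zero, zero_smul,
        one_smul, smul_zero]
      convert Ideal.zero_mem Jid using 2
      ring_nf
      all_goals simp [CharTwo.two_eq_zero]
  · -- 2 ≤ i
    obtain ⟨d, rfl⟩ : ∃ d, i = d + 2 := ⟨i - 2, by omega⟩
    rw [if_pos (show 2 ≤ d + 2 + 2 by omega), if_pos (show 2 ≤ d + 2 by omega),
      if_pos (show 2 ≤ d + 2 by omega),
      if_neg (show ¬ (d + 2 ≤ 1 ∧ j = 0 ∧ k = 0) by omega)]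
    simp only [Nat.add_sub_cancel]
    rw [Dder_prod6]
    simp only [Nat.add_sub_cancel]
    rcases Nat.mod_two_eq_zero_or_one j with hj | hj
    · obtain ⟨t, rfl⟩ : ∃ t, j = 2*t := ⟨j/2, by omega⟩
      rcases Nat.mod_two_eq_zero_or_one k with hk | hk
      · obtain ⟨s, rfl⟩ : ∃ s, k = 2*s := ⟨k/2, by omega⟩
        push_cast
        simp only [show (2:ZMod 2) = 0 from rfl, zero_mul, zero_add, add_zero, zero_smul,
          one_smul, smul_zero, Nat.add_sub_cancel]
        convert Ideal.zero_mem Jid using 2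
        ring_nf
        all_goals simp [CharTwo.two_eq_zero]
      · obtain ⟨s, rfl⟩ : ∃ s, k = 2*s+1 := ⟨k/2, by omega⟩
        push_cast
        simp only [show (2:ZMod 2) = 0 from rfl, zero_mul, zero_add, add_zero, zero_smul,
          one_smul, smul_zero, Nat.add_sub_cancel]
        convert Ideal.zero_mem Jid using 2
        ring_nf
        all_goals simp [CharTwo.two_eq_zero]
    · obtain ⟨t, rfl⟩ : ∃ t, j = 2*t+1 := ⟨j/2, by omega⟩
      rcases Nat.mod_two_eq_zero_or_one k with hk | hk
      · obtain ⟨s, rfl⟩ : ∃ s, k = 2*s := ⟨k/2, by omega⟩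
        push_cast
        simp only [show (2:ZMod 2) = 0 from rfl, zero_mul, zero_add, add_zero, zero_smul,
          one_smul, smul_zero, Nat.add_sub_cancel]
        convert Ideal.zero_mem Jid using 2
        ring_nf
        all_goals simp [CharTwo.two_eq_zero]
      · obtain ⟨s, rfl⟩ : ∃ s, k = 2*s+1 := ⟨k/2, by omega⟩
        push_cast
        simp only [show (2:ZMod 2) = 0 from rfl, zero_mul, zero_add, add_zero, zero_smul,
          one_smul, smul_zero, Nat.add_sub_cancel]
        convert Ideal.zero_mem Jid using 2
        ring_nf
        all_goals simp [CharTwo.two_eq_zero]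

theorem homotopy_identity (f : MvPolynomial (Fin 6) (ZMod 2)) :
    Pmap (Dder f) + Dder (Pmap f) - (lamMap f + f) ∈ Jid := by
  induction f using MvPolynomial.induction_on' with
  | monomial u c =>
    rcases (show c = 0 ∨ c = 1 by fin_cases c; exacts [Or.inl rfl, Or.inr rfl]) with rfl | rfl
    · have hP : Pmap (monomial u 0) = 0 := by
        simpa using Pmap_monomial u 0
      have hL : lamMap (monomial u 0) = 0 := by
        simpa using lamMap_monomial u 0
      rw [monomial_zero] at hP hL
      rw [monomial_zero, map_zero, hP, map_zero, hL]
      simp only [add_zero, sub_zero]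
      exact Ideal.zero_mem Jid
    · exact key u
  | add p q hp hq =>
    have e : Pmap (Dder (p + q)) + Dder (Pmap (p + q)) - (lamMap (p + q) + (p + q))
        = (Pmap (Dder p) + Dder (Pmap p) - (lamMap p + p))
        + (Pmap (Dder q) + Dder (Pmap q) - (lamMap q + q)) := by
      rw [map_add, Pmap_add, lamMap_add, Pmap_add, map_add]
      ring
    rw [e]
    exact Ideal.add_mem _ hp hq
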